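/- If α and β are two distinct quaternions in the same conjugacy class (β ∈ [α], β ≠ α), then a polynomial f ∈ ℍ[z] is divisible on the left by both z − α and z − β (i.e., f = (z−α)q₁ = (z−β)q₂) if and only if f is divisible by the real characteristic polynomial 𝒳_{[α]}(z) = z² − 2 Re(α) z + |α|². -/

import Mathlib

open Polynomial

lemma charfac (γ : Quaternion ℝ) :
    (X ^ 2 - C ((2 * γ.re : ℝ) : Quaternion ℝ) * X + C ((‖γ‖ ^ 2 : ℝ) : Quaternion ℝ))
      = (X - C γ) * (X - C (star γ)) := by
  have h1 : ((2 * γ.re : ℝ) : Quaternion ℝ) = γ + star γ := (Quaternion.self_add_star' γ).symm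
  have h2 : ((‖γ‖ ^ 2 : ℝ) : Quaternion ℝ) = γ * star γ := by
    rw [Quaternion.self_mul_star, sq, Quaternion.normSq_eq_norm_mul_self]
  rw [h1, h2, C_add, C_mul, sub_mul, mul_sub, mul_sub, (X_mul (p := C (star γ))), sq]
  noncomm_ring

lemma combine (α β : Quaternion ℝ) (hne : β ≠ α) (χ : Polynomial (Quaternion ℝ))
    (hχα : χ = (X - C α) * (X - C (star α)))
    (hχβ : χ = (X - C β) * (X - C (star β)))
    (f : Polynomial (Quaternion ℝ)) :
    ((∃ q₁, f = (X - C α) * q₁) ∧ (∃ q₂, f = (X - C β) * q₂)) ↔ ∃ q, f = χ * q := by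
  have hmonic : χ.Monic := by
    rw [hχα]; exact (monic_X_sub_C α).mul (monic_X_sub_C (star α))
  constructor
  · rintro ⟨⟨q₁, hq₁⟩, ⟨q₂, hq₂⟩⟩
    refine ⟨f /ₘ χ, ?_⟩
    have hdm := modByMonic_add_div f χ
    set d := f /ₘ χ with hd
    set r := f %ₘ χ with hr
    have hdeg : r.degree < 2 := by
      have := degree_modByMonic_lt f hmonic
      have hdχ : χ.degree = 2 := by
        rw [hχα, degree_mul, degree_X_sub_C, degree_X_sub_C]; rfl
      rwa [hdχ] at this
    have hrsub : r = f - χ * d := eq_sub_of_add_eq hdm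
    have hr1 : r = (X - C α) * (q₁ - (X - C (star α)) * d) := by
      rw [hrsub, hq₁, hχα]; noncomm_ring
    have hr2 : r = (X - C β) * (q₂ - (X - C (star β)) * d) := by
      rw [hrsub, hq₂, hχβ]; noncomm_ring
    have key : ∀ (γ : Quaternion ℝ) (s : Polynomial (Quaternion ℝ)),
        r = (X - C γ) * s → s = C (s.coeff 0) := by
      intro γ s hs
      have hdegrs : r.degree = 1 + s.degree := by
        rw [hs, degree_mul, degree_X_sub_C]
      have hlt : s.degree < 1 := by
        have h2 : (1 : WithBot ℕ) + s.degree < 1 + 1 := by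
          rw [← hdegrs]; exact hdeg
        exact (WithBot.add_lt_add_iff_left (by simp : (1 : WithBot ℕ) ≠ ⊥)).mp h2
      have hdegs : s.degree ≤ 0 := Nat.WithBot.lt_one_iff_le_zero.mp hlt
      exact eq_C_of_degree_le_zero hdegs
    have hc1 := key α _ hr1
    have hc2 := key β _ hr2
    set c₁ := (q₁ - (X - C (star α)) * d).coeff 0
    set c₂ := (q₂ - (X - C (star β)) * d).coeff 0
    have hrc1 : r = (X - C α) * C c₁ := by rw [hr1, hc1]
    have hrc2 : r = (X - C β) * C c₂ := by rw [hr2, hc2]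
    have hcoeff1 : c₁ = c₂ := by
      have := congrArg (fun p => p.coeff 1) (hrc1.symm.trans hrc2)
      simpa [coeff_mul_C, coeff_X] using this
    have hcoeff0 : -α * c₁ = -β * c₂ := by
      have := congrArg (fun p => p.coeff 0) (hrc1.symm.trans hrc2)
      simpa [coeff_mul_C, coeff_X, neg_mul] using this
    have hc0 : c₁ = 0 := by
      rw [← hcoeff1, neg_mul, neg_mul, neg_inj] at hcoeff0
      have : (α - β) * c₁ = 0 := by rw [sub_mul, sub_eq_zero]; exact hcoeff0
      rcases mul_eq_zero.mp this with h | h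
      · exact absurd (sub_eq_zero.mp h).symm hne
      · exact h
    have hr0 : r = 0 := by rw [hrc1, hc0]; simp
    rw [← hdm, hr0, zero_add]
  · rintro ⟨q, hq⟩
    exact ⟨⟨(X - C (star α)) * q, by rw [hq, hχα, mul_assoc]⟩,
      ⟨(X - C (star β)) * q, by rw [hq, hχβ, mul_assoc]⟩⟩

/-- Two distinct conjugate left linear divisors combine into the characteristic polynomial. -/
theorem stmt3 (α β : Quaternion ℝ) (hβ : ∃ h : Quaternion ℝ, h ≠ 0 ∧ β = h⁻¹ * α * h)
    (hne : β ≠ α) (f : Polynomial (Quaternion ℝ)) :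
    ((∃ q₁, f = (X - C α) * q₁) ∧ (∃ q₂, f = (X - C β) * q₂)) ↔
      ∃ q, f = (X ^ 2 - C ((2 * α.re : ℝ) : Quaternion ℝ) * X
        + C ((‖α‖ ^ 2 : ℝ) : Quaternion ℝ)) * q := by
  obtain ⟨h, hh, hβeq⟩ := hβ
  have hrecomm : ∀ a b : Quaternion ℝ, (a * b).re = (b * a).re := by
    intro a b; simp [Quaternion.re_mul]; ring
  have hre : β.re = α.re := by
    rw [hβeq, hrecomm, ← mul_assoc, mul_inv_cancel₀ hh, one_mul]
  have hnorm : ‖β‖ = ‖α‖ := by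
    rw [hβeq, norm_mul, norm_mul, norm_inv, mul_comm, ← mul_assoc,
      mul_inv_cancel₀ (norm_ne_zero_iff.mpr hh), one_mul]
  exact combine α β hne _ (charfac α) (by rw [← hre, ← hnorm]; exact charfac β) f
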